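/- The class number of the imaginary quadratic field ℚ(√-47) equals 5. -/

import Mathlib

section QuadHelpers

variable {R S : Type*} [CommRing R] [CommRing S] [Algebra R S]
variable (b : Module.Basis (Fin 2) R S) {t : S}
variable (hb0 : b 0 = 1) (hb1 : b 1 = t) (ht : t * t = t - 12)

include hb0 hb1 in
theorem quad_repr (x y : R) (i : Fin 2) :
    b.repr (x • (1 : S) + y • t) i = ![x, y] i := by
  rw [← hb0, ← hb1]
  simp only [map_add, map_smul, Module.Basis.repr_self]
  fin_cases i <;> simp

include hb0 hb1 ht in
theorem quad_leftMulMatrix (x y : R) :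
    Algebra.leftMulMatrix b (x • (1 : S) + y • t) = !![x, -12 * y; y, x + y] := by
  ext i j
  rw [Algebra.leftMulMatrix_eq_repr_mul]
  fin_cases j
  · show (b.repr ((x • (1 : S) + y • t) * b 0)) i = !![x, -12 * y; y, x + y] i 0
    have h : (x • (1 : S) + y • t) * b 0 = x • (1 : S) + y • t := by rw [hb0, mul_one]
    rw [h, quad_repr b hb0 hb1]
    fin_cases i <;> simp
  · show (b.repr ((x • (1 : S) + y • t) * b 1)) i = !![x, -12 * y; y, x + y] i 1
    have h : (x • (1 : S) + y • t) * b 1 = (-12 * y) • (1 : S) + (x + y) • t := by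
      rw [hb1]
      have h12 : (12 : S) = (12 : ℕ) • (1 : S) := by simp
      calc (x • (1 : S) + y • t) * t = x • t + y • (t * t) := by
            rw [add_mul, smul_mul_assoc, smul_mul_assoc, one_mul]
      _ = x • t + y • t - y • (12 : S) := by rw [ht, smul_sub, add_sub_assoc]
      _ = (-12 * y) • (1 : S) + (x + y) • t := by
            rw [h12, smul_comm y ((12:ℕ)) (1:S)]
            push_cast
            module
    rw [h, quad_repr b hb0 hb1]
    fin_cases i <;> simp

include hb0 hb1 ht in
theorem quad_norm (x y : R) :
    Algebra.norm R (x • (1 : S) + y • t) = x ^ 2 + x * y + 12 * y ^ 2 := by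
  rw [Algebra.norm_eq_matrix_det b, quad_leftMulMatrix b hb0 hb1 ht, Matrix.det_fin_two_of]
  ring

include hb0 hb1 ht in
theorem quad_trace (x y : R) :
    Algebra.trace R S (x • (1 : S) + y • t) = 2 * x + y := by
  rw [Algebra.trace_eq_matrix_trace b, quad_leftMulMatrix b hb0 hb1 ht, Matrix.trace_fin_two_of]
  ring

include hb0 hb1 ht in
theorem quad_discr : Algebra.discr R b = -47 := by
  rw [Algebra.discr_def]
  have e00 : b 0 * b 0 = (1:R) • (1 : S) + (0:R) • t := by rw [hb0]; simp
  have e01 : b 0 * b 1 = (0:R) • (1 : S) + (1:R) • t := by rw [hb0, hb1]; simp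
  have e10 : b 1 * b 0 = (0:R) • (1 : S) + (1:R) • t := by rw [hb0, hb1]; simp
  have e11 : b 1 * b 1 = (-12:R) • (1 : S) + (1:R) • t := by
    rw [hb1, ht]
    have h12 : (12 : S) = (12 : ℕ) • (1 : S) := by simp
    rw [h12]
    push_cast
    module
  have tr : ∀ (x y : R), Algebra.trace R S (x • (1 : S) + y • t) = 2 * x + y :=
    quad_trace b hb0 hb1 ht
  have hmat : Algebra.traceMatrix R ⇑b = !![2, 1; 1, -23] := by
    ext i j
    fin_cases i <;> fin_cases j <;>
      simp only [Algebra.traceMatrix_apply, Algebra.traceForm_apply]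
    · show Algebra.trace R S (b 0 * b 0) = !![2, 1; 1, -23] 0 0
      rw [e00, tr]; norm_num
    · show Algebra.trace R S (b 0 * b 1) = !![2, 1; 1, -23] 0 1
      rw [e01, tr]; norm_num
    · show Algebra.trace R S (b 1 * b 0) = !![2, 1; 1, -23] 1 0
      rw [e10, tr]; norm_num
    · show Algebra.trace R S (b 1 * b 1) = !![2, 1; 1, -23] 1 1
      rw [e11, tr]; norm_num
  rw [hmat, Matrix.det_fin_two_of]
  norm_num

end QuadHelpers

theorem quad_mul {S : Type*} [CommRing S] {t : S} (ht : t * t = t - 12) (a b c d : ℤ) :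
    (a • (1:S) + b • t) * (c • (1:S) + d • t)
      = (a * c - 12 * (b * d)) • (1:S) + (a * d + b * c + b * d) • t := by
  simp only [zsmul_eq_mul]
  push_cast
  linear_combination ((b:S) * (d:S)) * ht

open Polynomial

section FieldSetup

variable {K : Type*} [Field K] [NumberField K] {θ : K}

theorem exists_basisQ (hsq : θ * θ = θ - 12) (hnr : ∀ q : ℚ, algebraMap ℚ K q ≠ θ)
    (hdim : Module.finrank ℚ K = 2) :
    ∃ b : Module.Basis (Fin 2) ℚ K, b 0 = 1 ∧ b 1 = θ := by
  have hli : LinearIndependent ℚ ![(1 : K), θ] := by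
    rw [linearIndependent_fin2]
    constructor
    · show θ ≠ 0
      intro h
      exact hnr 0 (by simp [h])
    · intro a ha
      simp only [Matrix.cons_val_one, Matrix.head_cons, Matrix.cons_val_zero] at ha
      have ha0 : a ≠ 0 := by rintro rfl; simp at ha
      apply hnr a⁻¹
      rw [Algebra.algebraMap_eq_smul_one, ← ha, smul_smul, inv_mul_cancel₀ ha0, one_smul]
  have hcard : Fintype.card (Fin 2) = Module.finrank ℚ K := by simp [hdim]
  refine ⟨basisOfLinearIndependentOfCardEqFinrank hli hcard, ?_, ?_⟩ <;>
    rw [coe_basisOfLinearIndependentOfCardEqFinrank] <;> simp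

theorem minpolyQ (hsq : θ * θ = θ - 12) (hnr : ∀ q : ℚ, algebraMap ℚ K q ≠ θ) :
    minpoly ℚ θ = X ^ 2 - X + 12 := by
  have hint : IsIntegral ℚ θ := IsIntegral.of_finite ℚ θ
  have haev : aeval θ (X ^ 2 - X + 12 : ℚ[X]) = 0 := by
    simp only [map_add, map_sub, map_pow, aeval_X, map_ofNat]
    rw [sq, hsq]; ring
  have hdvd : minpoly ℚ θ ∣ X ^ 2 - X + 12 := minpoly.dvd ℚ θ haev
  have hmono : (X ^ 2 - X + 12 : ℚ[X]).Monic := by monicity!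
  have hdeg : (X ^ 2 - X + 12 : ℚ[X]).natDegree = 2 := by compute_degree!
  have hmm := minpoly.monic hint
  have h1 : (minpoly ℚ θ).natDegree ≠ 1 := by
    intro h
    obtain ⟨q, hq⟩ := minpoly.natDegree_eq_one_iff.mp h
    exact hnr q hq
  have hle : (minpoly ℚ θ).natDegree ≤ 2 := by
    rw [← hdeg]
    exact Polynomial.natDegree_le_of_dvd hdvd (hmono.ne_zero)
  have hpos : 0 < (minpoly ℚ θ).natDegree := minpoly.natDegree_pos hint
  have h2 : (minpoly ℚ θ).natDegree = 2 := by omega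
  exact Polynomial.eq_of_dvd_of_natDegree_le_of_leadingCoeff hdvd (by omega)
    (by rw [hmm.leadingCoeff, hmono.leadingCoeff])

theorem mem_adjoin_iff (hsq : θ * θ = θ - 12) {x : K} :
    x ∈ Algebra.adjoin ℤ {θ} ↔ ∃ a b : ℤ, x = a • (1 : K) + b • θ := by
  constructor
  · intro hx
    induction hx using Algebra.adjoin_induction with
    | mem y hy =>
      rw [Set.mem_singleton_iff] at hy
      exact ⟨0, 1, by simp [hy]⟩
    | algebraMap r => exact ⟨r, 0, by simp [Algebra.algebraMap_eq_smul_one]⟩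
    | add y z hy hz ihy ihz =>
      obtain ⟨a, b, rfl⟩ := ihy
      obtain ⟨c, d, rfl⟩ := ihz
      exact ⟨a + c, b + d, by push_cast; module⟩
    | mul y z hy hz ihy ihz =>
      obtain ⟨a, b, rfl⟩ := ihy
      obtain ⟨c, d, rfl⟩ := ihz
      refine ⟨a * c - 12 * (b * d), a * d + b * c + b * d, ?_⟩
      have expand : (a • (1:K) + b • θ) * (c • (1:K) + d • θ)
          = (a * c) • (1:K) + (a * d + b * c) • θ + (b * d) • (θ * θ) := by
        simp only [zsmul_eq_mul]
        push_cast
        ring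
      rw [expand, hsq]
      simp only [zsmul_eq_mul]
      push_cast
      ring
  · rintro ⟨a, b, rfl⟩
    exact add_mem (Subalgebra.smul_mem _ (one_mem _) a)
      (Subalgebra.smul_mem _ (Algebra.self_mem_adjoin_singleton ℤ θ) b)

end FieldSetup

theorem int_div47 {a b t n : ℤ} (htr : 2 * a + b = 47 * t)
    (hnm : a ^ 2 + a * b + 12 * b ^ 2 = 47 ^ 2 * n) : 47 ∣ a ∧ 47 ∣ b := by
  have hb : b = 47 * t - 2 * a := by omega
  subst hb
  have h2 : 47 * a ^ 2 = 47 * (47 * (n + a * t - 12 * t ^ 2)) := by linear_combination hnm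
  have h3 : a ^ 2 = 47 * (n + a * t - 12 * t ^ 2) :=
    mul_left_cancel₀ (by norm_num) h2
  have hp : Prime (47 : ℤ) := by norm_num
  have ha : (47 : ℤ) ∣ a := hp.dvd_of_dvd_pow (n := 2) ⟨_, h3⟩
  obtain ⟨a', rfl⟩ := ha
  exact ⟨⟨a', rfl⟩, ⟨t - 2 * a', by ring⟩⟩

section FieldSetup2

variable {K : Type*} [Field K] [NumberField K] {θ : K}

theorem theta_isIntegral (hsq : θ * θ = θ - 12) : IsIntegral ℤ θ := by
  refine ⟨X ^ 2 - X + 12, by monicity!, ?_⟩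
  simp only [eval₂_add, eval₂_sub, eval₂_pow, eval₂_X, eval₂_ofNat]
  rw [sq, hsq]; ring

theorem isIntegralClosure_adjoin (hsq : θ * θ = θ - 12)
    (hnr : ∀ q : ℚ, algebraMap ℚ K q ≠ θ) (hdim : Module.finrank ℚ K = 2) :
    IsIntegralClosure (Algebra.adjoin ℤ ({θ} : Set K)) ℤ K := by
  have hθint : IsIntegral ℤ θ := theta_isIntegral hsq
  refine ⟨Subtype.val_injective, fun {x} => ⟨fun hx => ?_, ?_⟩⟩
  swap
  · rintro ⟨y, rfl⟩
    exact IsIntegral.algebraMap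
      ((le_integralClosure_iff_isIntegral.1 (adjoin_le_integralClosure hθint)).isIntegral _)
  obtain ⟨b, hb0, hb1⟩ := exists_basisQ hsq hnr hdim
  let B : PowerBasis ℚ K :=
    { gen := θ, dim := 2, basis := b,
      basis_eq_pow := by
        intro i
        fin_cases i
        · simpa using hb0
        · simpa using hb1 }
  have hdiscr : Algebra.discr ℚ ⇑B.basis = -47 := quad_discr b hb0 hb1 hsq
  have H := Algebra.discr_mul_isIntegral_mem_adjoin ℚ (B := B) hθint hx
  rw [hdiscr] at H
  have H47 : (47 : ℚ) • x ∈ Algebra.adjoin ℤ ({θ} : Set K) := by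
    have := neg_mem H
    rwa [show -((-47 : ℚ) • x) = (47 : ℚ) • x by rw [← neg_smul]; norm_num] at this
  obtain ⟨a, c, hac⟩ := (mem_adjoin_iff hsq).mp H47
  have hac' : (47 : ℚ) • x = (a : ℚ) • (1 : K) + (c : ℚ) • θ := by
    rw [hac, Int.cast_smul_eq_zsmul ℚ, Int.cast_smul_eq_zsmul ℚ]
  -- trace is an integer
  obtain ⟨t, ht⟩ := IsIntegrallyClosed.isIntegral_iff.mp (Algebra.isIntegral_trace (R := ℤ) (L := ℚ) hx)
  obtain ⟨n, hn⟩ := IsIntegrallyClosed.isIntegral_iff.mp (Algebra.isIntegral_norm (R := ℤ) ℚ hx)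
  have htr : 2 * a + c = 47 * t := by
    have e1 : Algebra.trace ℚ K ((47 : ℚ) • x) = 47 * (t : ℚ) := by
      rw [map_smul, smul_eq_mul, ← ht]; rfl
    rw [hac', quad_trace b hb0 hb1 hsq] at e1
    exact_mod_cast e1
  have hnm : a ^ 2 + a * c + 12 * c ^ 2 = 47 ^ 2 * n := by
    have e1 : Algebra.norm ℚ ((47 : ℚ) • x) = 47 ^ 2 * (n : ℚ) := by
      rw [Algebra.smul_def, map_mul, Algebra.norm_algebraMap, hdim, ← hn]; rfl
    rw [hac', quad_norm b hb0 hb1 hsq] at e1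
    exact_mod_cast e1
  obtain ⟨⟨a', rfl⟩, ⟨c', rfl⟩⟩ := int_div47 htr hnm
  have hxeq : x = (a' : ℚ) • (1 : K) + (c' : ℚ) • θ := by
    apply smul_right_injective K (by norm_num : (47 : ℚ) ≠ 0)
    show (47 : ℚ) • x = (47 : ℚ) • _
    rw [hac']
    push_cast
    module
  refine ⟨⟨x, ?_⟩, rfl⟩
  rw [mem_adjoin_iff hsq]
  exact ⟨a', c', by rw [hxeq, Int.cast_smul_eq_zsmul, Int.cast_smul_eq_zsmul]⟩

end FieldSetup2

open Polynomial NumberField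

section IntSetup

variable {K : Type*} [Field K] [NumberField K] {θ : K}

theorem exists_basisZ (hsq : θ * θ = θ - 12) (hnr : ∀ q : ℚ, algebraMap ℚ K q ≠ θ)
    (hdim : Module.finrank ℚ K = 2) :
    ∃ (ϑ : 𝓞 K) (b : Module.Basis (Fin 2) ℤ (𝓞 K)),
      (ϑ : K) = θ ∧ b 0 = 1 ∧ b 1 = ϑ := by
  have hθint : IsIntegral ℤ θ := theta_isIntegral hsq
  haveI hic : IsIntegralClosure (Algebra.adjoin ℤ ({θ} : Set K)) ℤ K :=
    isIntegralClosure_adjoin hsq hnr hdim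
  -- minpoly ℤ θ
  have hmpz : minpoly ℤ θ = (X ^ 2 - X + 12 : ℤ[X]) := by
    have h1 : Polynomial.map (algebraMap ℤ ℚ) (minpoly ℤ θ) = minpoly ℚ θ :=
      (minpoly.isIntegrallyClosed_eq_field_fractions' ℚ hθint).symm
    rw [minpolyQ hsq hnr] at h1
    apply Polynomial.map_injective (algebraMap ℤ ℚ) (algebraMap ℤ ℚ).injective_int
    rw [h1]
    simp only [Polynomial.map_add, Polynomial.map_sub, Polynomial.map_pow, Polynomial.map_X,
      Polynomial.map_ofNat]
  let e : Algebra.adjoin ℤ ({θ} : Set K) ≃ₐ[ℤ] 𝓞 K :=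
    IsIntegralClosure.equiv ℤ (Algebra.adjoin ℤ ({θ} : Set K)) K (𝓞 K)
  let pbA := Algebra.adjoin.powerBasis' hθint
  let pb := pbA.map e
  have hgenK : (algebraMap (𝓞 K) K) pb.gen = θ := by
    rw [PowerBasis.map_gen]
    rw [IsIntegralClosure.algebraMap_equiv ℤ (Algebra.adjoin ℤ ({θ} : Set K)) K (𝓞 K)]
    rw [Algebra.adjoin.powerBasis'_gen]
    rfl
  have hdim2 : pb.dim = 2 := by
    show pbA.dim = 2
    rw [Algebra.adjoin.powerBasis'_dim, hmpz]
    compute_degree!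
  refine ⟨pb.gen, (pb.basis.reindex (finCongr hdim2)), hgenK, ?_, ?_⟩
  · rw [Module.Basis.reindex_apply, pb.basis_eq_pow]
    norm_num
  · rw [Module.Basis.reindex_apply, pb.basis_eq_pow]
    have : (((finCongr hdim2).symm 1 : Fin pb.dim) : ℕ) = 1 := by simp
    rw [this, pow_one]

end IntSetup

section OKSetup

variable {K : Type*} [Field K] [NumberField K] {ϑ : 𝓞 K}
variable (b : Module.Basis (Fin 2) ℤ (𝓞 K))

theorem coords (x : 𝓞 K) (hb0 : b 0 = 1) (hb1 : b 1 = ϑ) :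
    ∃ a c : ℤ, x = a • (1 : 𝓞 K) + c • ϑ := by
  refine ⟨b.repr x 0, b.repr x 1, ?_⟩
  rw [← hb0, ← hb1]
  exact (by rw [← Fin.sum_univ_two (fun i => b.repr x i • b i)]; exact (b.sum_repr x).symm)

theorem discrK (hb0 : b 0 = 1) (hb1 : b 1 = ϑ) (hsq : ϑ * ϑ = ϑ - 12) :
    NumberField.discr K = -47 := by
  rw [← NumberField.discr_eq_discr K b]
  exact quad_discr b hb0 hb1 hsq

end OKSetup

open NumberField

section Ideals

variable {K : Type*} [Field K] [NumberField K] {ϑ : 𝓞 K}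
variable (b : Module.Basis (Fin 2) ℤ (𝓞 K))

theorem repr_eq (hb0 : b 0 = 1) (hb1 : b 1 = ϑ) {A C D E : ℤ}
    (h : A • (1 : 𝓞 K) + C • ϑ = D • (1 : 𝓞 K) + E • ϑ) : A = D ∧ C = E := by
  have h0 := congrArg (fun u => b.repr u 0) h
  have h1 := congrArg (fun u => b.repr u 1) h
  simp only [quad_repr b hb0 hb1] at h0 h1
  simp only [Matrix.cons_val_zero, Matrix.cons_val_one, Matrix.head_cons] at h0 h1
  exact ⟨h0, h1⟩

theorem mem_span_char (hb0 : b 0 = 1) (hb1 : b 1 = ϑ) (hsq : ϑ * ϑ = ϑ - 12)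
    (p e x₀ x₁ : ℤ) (hpe : p ∣ e ^ 2 - e + 12) :
    (x₀ • (1 : 𝓞 K) + x₁ • ϑ) ∈ Ideal.span {(p : 𝓞 K), ϑ - (e : 𝓞 K)} ↔ p ∣ x₀ + e * x₁ := by
  have hp_rep : (p : 𝓞 K) = p • (1 : 𝓞 K) + (0 : ℤ) • ϑ := by
    simp only [zsmul_eq_mul]; push_cast; ring
  have hd_rep : ϑ - (e : 𝓞 K) = (-e) • (1 : 𝓞 K) + (1 : ℤ) • ϑ := by
    simp only [zsmul_eq_mul]; push_cast; ring
  constructor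
  · intro h
    obtain ⟨y, z, hyz⟩ := Ideal.mem_span_pair.mp h
    obtain ⟨y0, y1, rfl⟩ := coords b y hb0 hb1
    obtain ⟨z0, z1, rfl⟩ := coords b z hb0 hb1
    rw [hp_rep, hd_rep, quad_mul hsq y0 y1 p 0, quad_mul hsq z0 z1 (-e) 1] at hyz
    have hyz2 : ((y0 * p - 12 * (y1 * 0)) + (z0 * (-e) - 12 * (z1 * 1))) • (1 : 𝓞 K)
        + ((y0 * 0 + y1 * p + y1 * 0) + (z0 * 1 + z1 * (-e) + z1 * 1)) • ϑ
        = x₀ • (1 : 𝓞 K) + x₁ • ϑ := by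
      rw [← hyz]; push_cast; module
    obtain ⟨hA, hC⟩ := repr_eq b hb0 hb1 hyz2
    obtain ⟨k, hk⟩ := hpe
    exact ⟨y0 + e * y1 - z1 * k, by linear_combination (-1 : ℤ) * hA + (-e) * hC + (-z1) * hk⟩
  · rintro ⟨m, hm⟩
    apply Ideal.mem_span_pair.mpr
    refine ⟨(m : 𝓞 K), (x₁ : 𝓞 K), ?_⟩
    have hm' : ((x₀ : 𝓞 K) + e * x₁) = p * m := by exact_mod_cast congrArg (Int.cast : ℤ → 𝓞 K) hm
    simp only [zsmul_eq_mul]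
    push_cast
    linear_combination -hm'

theorem char_maximal (hb0 : b 0 = 1) (hb1 : b 1 = ϑ) (hsq : ϑ * ϑ = ϑ - 12)
    (p e : ℤ) (hpe : p ∣ e ^ 2 - e + 12) (hp : Prime p) :
    (Ideal.span {(p : 𝓞 K), ϑ - (e : 𝓞 K)}).IsMaximal := by
  rw [Ideal.isMaximal_iff]
  constructor
  · intro h1
    have hrw : (1 : 𝓞 K) = (1 : ℤ) • (1 : 𝓞 K) + (0 : ℤ) • ϑ := by simp
    rw [hrw] at h1
    have := (mem_span_char b hb0 hb1 hsq p e 1 0 hpe).mp h1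
    simp only [mul_zero, add_zero] at this
    exact hp.not_unit (isUnit_of_dvd_one this)
  · intro J x hIJ hxI hxJ
    obtain ⟨x₀, x₁, rfl⟩ := coords b x hb0 hb1
    have hnd : ¬ p ∣ x₀ + e * x₁ := fun h =>
      hxI ((mem_span_char b hb0 hb1 hsq p e x₀ x₁ hpe).mpr h)
    obtain ⟨u, v, huv⟩ := (hp.coprime_iff_not_dvd).mpr hnd
    have hmem : ((x₀ - (x₀ + e * x₁)) • (1 : 𝓞 K) + x₁ • ϑ)
        ∈ Ideal.span {(p : 𝓞 K), ϑ - (e : 𝓞 K)} :=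
      (mem_span_char b hb0 hb1 hsq p e _ x₁ hpe).mpr ⟨0, by ring⟩
    have huv' : ((u : 𝓞 K) * p + v * (x₀ + e * x₁)) = 1 := by
      exact_mod_cast congrArg (Int.cast : ℤ → 𝓞 K) huv
    have hkey : (1 : 𝓞 K) = (u : 𝓞 K) * (p : 𝓞 K)
        + (v : 𝓞 K) * (x₀ • (1 : 𝓞 K) + x₁ • ϑ)
        - (v : 𝓞 K) * ((x₀ - (x₀ + e * x₁)) • (1 : 𝓞 K) + x₁ • ϑ) := by
      simp only [zsmul_eq_mul]
      push_cast
      linear_combination -huv'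
    rw [hkey]
    refine Submodule.sub_mem _ (Submodule.add_mem _ ?_ ?_) ?_
    · exact Ideal.mul_mem_left _ _ (hIJ (Ideal.subset_span (by simp)))
    · exact Ideal.mul_mem_left _ _ hxJ
    · exact Ideal.mul_mem_left _ _ (hIJ hmem)

end Ideals

open NumberField Ideal

section IdealEqs

variable {K : Type*} [Field K] [NumberField K] {ϑ : 𝓞 K}
variable (b : Module.Basis (Fin 2) ℤ (𝓞 K))

theorem absNorm_mul (I J : Ideal (𝓞 K)) :
    Ideal.absNorm (I * J) = Ideal.absNorm I * Ideal.absNorm J := by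
  have : Ideal.absNorm (S := 𝓞 K) (I * J) = Ideal.absNorm I * Ideal.absNorm J :=
    _root_.map_mul (Ideal.absNorm (S := 𝓞 K)) I J
  exact this

theorem absNorm_pow (I : Ideal (𝓞 K)) (n : ℕ) :
    Ideal.absNorm (I ^ n) = Ideal.absNorm I ^ n := by
  have : Ideal.absNorm (S := 𝓞 K) (I ^ n) = Ideal.absNorm I ^ n :=
    _root_.map_pow (Ideal.absNorm (S := 𝓞 K)) I n
  exact this

theorem absNorm_singleton (hb0 : b 0 = 1) (hb1 : b 1 = ϑ) (hsq : ϑ * ϑ = ϑ - 12) (a c : ℤ) :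
    Ideal.absNorm (Ideal.span {a • (1 : 𝓞 K) + c • ϑ}) = (a ^ 2 + a * c + 12 * c ^ 2).natAbs := by
  rw [Ideal.absNorm_span_singleton, quad_norm b hb0 hb1 hsq]

theorem memP_iff (hb0 : b 0 = 1) (hb1 : b 1 = ϑ) (hsq : ϑ * ϑ = ϑ - 12) (x₀ x₁ : ℤ) :
    (x₀ • (1 : 𝓞 K) + x₁ • ϑ) ∈ Ideal.span {(2 : 𝓞 K), ϑ} ↔ (2 : ℤ) ∣ x₀ := by
  have hs : Ideal.span {(2 : 𝓞 K), ϑ} = Ideal.span {((2:ℤ) : 𝓞 K), ϑ - ((0:ℤ) : 𝓞 K)} := by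
    norm_num
  rw [hs, mem_span_char b hb0 hb1 hsq 2 0 x₀ x₁ (by norm_num)]
  simp

theorem memQ_iff (hb0 : b 0 = 1) (hb1 : b 1 = ϑ) (hsq : ϑ * ϑ = ϑ - 12) (x₀ x₁ : ℤ) :
    (x₀ • (1 : 𝓞 K) + x₁ • ϑ) ∈ Ideal.span {(2 : 𝓞 K), ϑ + 1} ↔ (2 : ℤ) ∣ x₀ - x₁ := by
  have hs : Ideal.span {(2 : 𝓞 K), ϑ + 1} = Ideal.span {((2:ℤ) : 𝓞 K), ϑ - ((-1:ℤ) : 𝓞 K)} := by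
    norm_num
  rw [hs, mem_span_char b hb0 hb1 hsq 2 (-1) x₀ x₁ (by norm_num)]
  constructor <;> (intro h; omega)

theorem memP3_iff (hb0 : b 0 = 1) (hb1 : b 1 = ϑ) (hsq : ϑ * ϑ = ϑ - 12) (x₀ x₁ : ℤ) :
    (x₀ • (1 : 𝓞 K) + x₁ • ϑ) ∈ Ideal.span {(3 : 𝓞 K), ϑ} ↔ (3 : ℤ) ∣ x₀ := by
  have hs : Ideal.span {(3 : 𝓞 K), ϑ} = Ideal.span {((3:ℤ) : 𝓞 K), ϑ - ((0:ℤ) : 𝓞 K)} := by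
    norm_num
  rw [hs, mem_span_char b hb0 hb1 hsq 3 0 x₀ x₁ (by norm_num)]
  simp

theorem memQ3_iff (hb0 : b 0 = 1) (hb1 : b 1 = ϑ) (hsq : ϑ * ϑ = ϑ - 12) (x₀ x₁ : ℤ) :
    (x₀ • (1 : 𝓞 K) + x₁ • ϑ) ∈ Ideal.span {(3 : 𝓞 K), ϑ - 1} ↔ (3 : ℤ) ∣ x₀ + x₁ := by
  have hs : Ideal.span {(3 : 𝓞 K), ϑ - 1} = Ideal.span {((3:ℤ) : 𝓞 K), ϑ - ((1:ℤ) : 𝓞 K)} := by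
    norm_num
  rw [hs, mem_span_char b hb0 hb1 hsq 3 1 x₀ x₁ (by norm_num)]
  constructor <;> (intro h; omega)

theorem maxP (hb0 : b 0 = 1) (hb1 : b 1 = ϑ) (hsq : ϑ * ϑ = ϑ - 12) :
    (Ideal.span {(2 : 𝓞 K), ϑ}).IsMaximal := by
  have hs : Ideal.span {(2 : 𝓞 K), ϑ} = Ideal.span {((2:ℤ) : 𝓞 K), ϑ - ((0:ℤ) : 𝓞 K)} := by
    norm_num
  rw [hs]
  exact char_maximal b hb0 hb1 hsq 2 0 (by norm_num) (by norm_num)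

theorem maxQ (hb0 : b 0 = 1) (hb1 : b 1 = ϑ) (hsq : ϑ * ϑ = ϑ - 12) :
    (Ideal.span {(2 : 𝓞 K), ϑ + 1}).IsMaximal := by
  have hs : Ideal.span {(2 : 𝓞 K), ϑ + 1} = Ideal.span {((2:ℤ) : 𝓞 K), ϑ - ((-1:ℤ) : 𝓞 K)} := by
    norm_num
  rw [hs]
  exact char_maximal b hb0 hb1 hsq 2 (-1) (by norm_num) (by norm_num)

theorem maxP3 (hb0 : b 0 = 1) (hb1 : b 1 = ϑ) (hsq : ϑ * ϑ = ϑ - 12) :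
    (Ideal.span {(3 : 𝓞 K), ϑ}).IsMaximal := by
  have hs : Ideal.span {(3 : 𝓞 K), ϑ} = Ideal.span {((3:ℤ) : 𝓞 K), ϑ - ((0:ℤ) : 𝓞 K)} := by
    norm_num
  rw [hs]
  exact char_maximal b hb0 hb1 hsq 3 0 (by norm_num) (by norm_num)

theorem maxQ3 (hb0 : b 0 = 1) (hb1 : b 1 = ϑ) (hsq : ϑ * ϑ = ϑ - 12) :
    (Ideal.span {(3 : 𝓞 K), ϑ - 1}).IsMaximal := by
  have hs : Ideal.span {(3 : 𝓞 K), ϑ - 1} = Ideal.span {((3:ℤ) : 𝓞 K), ϑ - ((1:ℤ) : 𝓞 K)} := by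
    norm_num
  rw [hs]
  exact char_maximal b hb0 hb1 hsq 3 1 (by norm_num) (by norm_num)

theorem eqPQ (hsq : ϑ * ϑ = ϑ - 12) :
    Ideal.span {(2 : 𝓞 K), ϑ} * Ideal.span {(2 : 𝓞 K), ϑ + 1} = Ideal.span {(2 : 𝓞 K)} := by
  apply le_antisymm
  · rw [Ideal.span_pair_mul_span_pair, Ideal.span_le]
    intro x hx
    simp only [Set.mem_insert_iff, Set.mem_singleton_iff] at hx
    rw [SetLike.mem_coe, Ideal.mem_span_singleton]
    rcases hx with rfl | rfl | rfl | rfl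
    · exact ⟨2, by ring⟩
    · exact ⟨ϑ + 1, rfl⟩
    · exact ⟨ϑ, by ring⟩
    · exact ⟨ϑ - 6, by linear_combination hsq⟩
  · rw [Ideal.span_le, Set.singleton_subset_iff, SetLike.mem_coe]
    have h2 : (2 : 𝓞 K) = 2 * 2 - 2 * (ϑ + 1) + ϑ * 2 := by ring
    have hmem : (2 : 𝓞 K) * 2 - 2 * (ϑ + 1) + ϑ * 2
        ∈ Ideal.span {(2 : 𝓞 K), ϑ} * Ideal.span {(2 : 𝓞 K), ϑ + 1} := by
      refine add_mem (sub_mem ?_ ?_) ?_ <;>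
        exact Ideal.mul_mem_mul (Ideal.subset_span (by simp)) (Ideal.subset_span (by simp))
    rwa [← h2] at hmem

theorem eqP3Q3 (hsq : ϑ * ϑ = ϑ - 12) :
    Ideal.span {(3 : 𝓞 K), ϑ} * Ideal.span {(3 : 𝓞 K), ϑ - 1} = Ideal.span {(3 : 𝓞 K)} := by
  apply le_antisymm
  · rw [Ideal.span_pair_mul_span_pair, Ideal.span_le]
    intro x hx
    simp only [Set.mem_insert_iff, Set.mem_singleton_iff] at hx
    rw [SetLike.mem_coe, Ideal.mem_span_singleton]
    rcases hx with rfl | rfl | rfl | rfl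
    · exact ⟨3, by ring⟩
    · exact ⟨ϑ - 1, rfl⟩
    · exact ⟨ϑ, by ring⟩
    · exact ⟨-4, by linear_combination hsq⟩
  · rw [Ideal.span_le, Set.singleton_subset_iff, SetLike.mem_coe]
    have h3 : (3 : 𝓞 K) = (-1) * (3 * 3) + (-1) * (ϑ * (ϑ - 1)) := by linear_combination hsq
    have hmem : (-1 : 𝓞 K) * (3 * 3) + (-1) * (ϑ * (ϑ - 1))
        ∈ Ideal.span {(3 : 𝓞 K), ϑ} * Ideal.span {(3 : 𝓞 K), ϑ - 1} := by
      refine add_mem ?_ ?_ <;>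
        exact Ideal.mul_mem_left _ _
          (Ideal.mul_mem_mul (Ideal.subset_span (by simp)) (Ideal.subset_span (by simp)))
    rwa [← h3] at hmem

theorem ideal_eq_of_le_of_absNorm {I J : Ideal (𝓞 K)} (hle : I ≤ J)
    (hn : Ideal.absNorm I = Ideal.absNorm J) (h0 : Ideal.absNorm I ≠ 0) : I = J := by
  obtain ⟨C, hC⟩ := Ideal.dvd_iff_le.mpr hle
  have hJ0 : Ideal.absNorm J ≠ 0 := hn ▸ h0
  rw [hC, absNorm_mul] at hn
  have hC1 : Ideal.absNorm C = 1 :=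
    Nat.eq_of_mul_eq_mul_left (Nat.pos_of_ne_zero hJ0) (by rw [hn, mul_one])
  rw [hC, Ideal.absNorm_eq_one_iff.mp hC1, Ideal.mul_top]

theorem absNormP (hb0 : b 0 = 1) (hb1 : b 1 = ϑ) (hsq : ϑ * ϑ = ϑ - 12) :
    Ideal.absNorm (Ideal.span {(2 : 𝓞 K), ϑ}) = 2
      ∧ Ideal.absNorm (Ideal.span {(2 : 𝓞 K), ϑ + 1}) = 2 := by
  have h2rep : (2 : 𝓞 K) = (2 : ℤ) • (1 : 𝓞 K) + (0 : ℤ) • ϑ := by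
    simp only [zsmul_eq_mul]; push_cast; ring
  have h4 : Ideal.absNorm (Ideal.span {(2 : 𝓞 K)}) = 4 := by
    rw [h2rep, absNorm_singleton b hb0 hb1 hsq]; norm_num
  have hmul : Ideal.absNorm (Ideal.span {(2 : 𝓞 K), ϑ})
      * Ideal.absNorm (Ideal.span {(2 : 𝓞 K), ϑ + 1}) = 4 := by
    rw [← absNorm_mul, eqPQ hsq, h4]
  have hP1 : Ideal.absNorm (Ideal.span {(2 : 𝓞 K), ϑ}) ≠ 1 := fun h =>
    (maxP b hb0 hb1 hsq).ne_top (Ideal.absNorm_eq_one_iff.mp h)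
  have hQ1 : Ideal.absNorm (Ideal.span {(2 : 𝓞 K), ϑ + 1}) ≠ 1 := fun h =>
    (maxQ b hb0 hb1 hsq).ne_top (Ideal.absNorm_eq_one_iff.mp h)
  have hle : Ideal.absNorm (Ideal.span {(2 : 𝓞 K), ϑ}) ≤ 4 :=
    Nat.le_of_dvd (by norm_num) ⟨_, hmul.symm⟩
  set a := Ideal.absNorm (Ideal.span {(2 : 𝓞 K), ϑ})
  set c := Ideal.absNorm (Ideal.span {(2 : 𝓞 K), ϑ + 1})
  interval_cases a <;> omega

theorem absNormP3 (hb0 : b 0 = 1) (hb1 : b 1 = ϑ) (hsq : ϑ * ϑ = ϑ - 12) :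
    Ideal.absNorm (Ideal.span {(3 : 𝓞 K), ϑ}) = 3
      ∧ Ideal.absNorm (Ideal.span {(3 : 𝓞 K), ϑ - 1}) = 3 := by
  have h3rep : (3 : 𝓞 K) = (3 : ℤ) • (1 : 𝓞 K) + (0 : ℤ) • ϑ := by
    simp only [zsmul_eq_mul]; push_cast; ring
  have h9 : Ideal.absNorm (Ideal.span {(3 : 𝓞 K)}) = 9 := by
    rw [h3rep, absNorm_singleton b hb0 hb1 hsq]; norm_num
  have hmul : Ideal.absNorm (Ideal.span {(3 : 𝓞 K), ϑ})
      * Ideal.absNorm (Ideal.span {(3 : 𝓞 K), ϑ - 1}) = 9 := by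
    rw [← absNorm_mul, eqP3Q3 hsq, h9]
  have hP1 : Ideal.absNorm (Ideal.span {(3 : 𝓞 K), ϑ}) ≠ 1 := fun h =>
    (maxP3 b hb0 hb1 hsq).ne_top (Ideal.absNorm_eq_one_iff.mp h)
  have hQ1 : Ideal.absNorm (Ideal.span {(3 : 𝓞 K), ϑ - 1}) ≠ 1 := fun h =>
    (maxQ3 b hb0 hb1 hsq).ne_top (Ideal.absNorm_eq_one_iff.mp h)
  have hle : Ideal.absNorm (Ideal.span {(3 : 𝓞 K), ϑ}) ≤ 9 :=
    Nat.le_of_dvd (by norm_num) ⟨_, hmul.symm⟩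
  set a := Ideal.absNorm (Ideal.span {(3 : 𝓞 K), ϑ})
  set c := Ideal.absNorm (Ideal.span {(3 : 𝓞 K), ϑ - 1})
  interval_cases a <;> omega

theorem eqTheta (hb0 : b 0 = 1) (hb1 : b 1 = ϑ) (hsq : ϑ * ϑ = ϑ - 12) :
    Ideal.span {ϑ} = Ideal.span {(2 : 𝓞 K), ϑ} ^ 2 * Ideal.span {(3 : 𝓞 K), ϑ} := by
  have hϑP : ϑ ∈ Ideal.span {(2 : 𝓞 K), ϑ} := Ideal.subset_span (by simp)
  have h2P : (2 : 𝓞 K) ∈ Ideal.span {(2 : 𝓞 K), ϑ} := Ideal.subset_span (by simp)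
  have hϑP3 : ϑ ∈ Ideal.span {(3 : 𝓞 K), ϑ} := Ideal.subset_span (by simp)
  have h3P3 : (3 : 𝓞 K) ∈ Ideal.span {(3 : 𝓞 K), ϑ} := Ideal.subset_span (by simp)
  apply ideal_eq_of_le_of_absNorm
  · rw [Ideal.span_singleton_le_iff_mem, pow_two]
    have hid : ϑ = (-1 : 𝓞 K) * (ϑ * ϑ * ϑ) + (-1) * (2 * 2 * 3) + (-5) * (2 * ϑ * 3)
        + 5 * (2 * 2 * ϑ) := by linear_combination (ϑ + 1) * hsq
    have hmem : (-1 : 𝓞 K) * (ϑ * ϑ * ϑ) + (-1) * (2 * 2 * 3) + (-5) * (2 * ϑ * 3)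
        + 5 * (2 * 2 * ϑ)
        ∈ Ideal.span {(2 : 𝓞 K), ϑ} * Ideal.span {(2 : 𝓞 K), ϑ} * Ideal.span {(3 : 𝓞 K), ϑ} := by
      refine add_mem (add_mem (add_mem ?_ ?_) ?_) ?_ <;>
        exact Ideal.mul_mem_left _ _
          (Ideal.mul_mem_mul (Ideal.mul_mem_mul (by assumption) (by assumption)) (by assumption))
    rwa [← hid] at hmem
  · have hϑrep : ϑ = (0 : ℤ) • (1 : 𝓞 K) + (1 : ℤ) • ϑ := by
      simp only [zsmul_eq_mul]; push_cast; ring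
    rw [absNorm_mul, absNorm_pow, (absNormP b hb0 hb1 hsq).1, (absNormP3 b hb0 hb1 hsq).1]
    rw [hϑrep, absNorm_singleton b hb0 hb1 hsq]
    norm_num
  · have hϑrep : ϑ = (0 : ℤ) • (1 : 𝓞 K) + (1 : ℤ) • ϑ := by
      simp only [zsmul_eq_mul]; push_cast; ring
    rw [hϑrep, absNorm_singleton b hb0 hb1 hsq]
    norm_num

theorem eqTheta4 (hb0 : b 0 = 1) (hb1 : b 1 = ϑ) (hsq : ϑ * ϑ = ϑ - 12) :
    Ideal.span {ϑ + 4} = Ideal.span {(2 : 𝓞 K), ϑ} ^ 5 := by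
  have hϑP : ϑ ∈ Ideal.span {(2 : 𝓞 K), ϑ} := Ideal.subset_span (by simp)
  have h2P : (2 : 𝓞 K) ∈ Ideal.span {(2 : 𝓞 K), ϑ} := Ideal.subset_span (by simp)
  apply ideal_eq_of_le_of_absNorm
  · rw [Ideal.span_singleton_le_iff_mem]
    have hid : ϑ + 4 = (-7 : 𝓞 K) * 2 ^ 5 + (-4) * (2 ^ 4 * ϑ) + 1 * (2 ^ 2 * ϑ ^ 3)
        + 1 * ϑ ^ 5 := by linear_combination (-(ϑ ^ 3 + ϑ ^ 2 - 7 * ϑ - 19)) * hsq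
    have hmem : (-7 : 𝓞 K) * 2 ^ 5 + (-4) * (2 ^ 4 * ϑ) + 1 * (2 ^ 2 * ϑ ^ 3) + 1 * ϑ ^ 5
        ∈ Ideal.span {(2 : 𝓞 K), ϑ} ^ 5 := by
      refine add_mem (add_mem (add_mem ?_ ?_) ?_) ?_
      · exact Ideal.mul_mem_left _ _ (Ideal.pow_mem_pow h2P 5)
      · refine Ideal.mul_mem_left _ _ ?_
        rw [show (5 : ℕ) = 4 + 1 from rfl, pow_add, pow_one]
        exact Ideal.mul_mem_mul (Ideal.pow_mem_pow h2P 4) hϑP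
      · refine Ideal.mul_mem_left _ _ ?_
        rw [show (5 : ℕ) = 2 + 3 from rfl, pow_add]
        exact Ideal.mul_mem_mul (Ideal.pow_mem_pow h2P 2) (Ideal.pow_mem_pow hϑP 3)
      · exact Ideal.mul_mem_left _ _ (Ideal.pow_mem_pow hϑP 5)
    rwa [← hid] at hmem
  · have hrep : ϑ + 4 = (4 : ℤ) • (1 : 𝓞 K) + (1 : ℤ) • ϑ := by
      simp only [zsmul_eq_mul]; push_cast; ring
    rw [hrep, absNorm_singleton b hb0 hb1 hsq, absNorm_pow, (absNormP b hb0 hb1 hsq).1]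
    norm_num
  · have hrep : ϑ + 4 = (4 : ℤ) • (1 : 𝓞 K) + (1 : ℤ) • ϑ := by
      simp only [zsmul_eq_mul]; push_cast; ring
    rw [hrep, absNorm_singleton b hb0 hb1 hsq]
    norm_num

end IdealEqs

set_option synthInstance.maxHeartbeats 1000000
set_option maxHeartbeats 1000000

open NumberField Ideal

section ClassGrp

variable {K : Type*} [Field K] [NumberField K] {ϑ : 𝓞 K}
variable (b : Module.Basis (Fin 2) ℤ (𝓞 K))

theorem no_norm_two (a c : ℤ) : (a ^ 2 + a * c + 12 * c ^ 2).natAbs ≠ 2 := by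
  intro h
  rcases Int.natAbs_eq_iff.mp h with h2 | h2
  · have key : (2 * a + c) ^ 2 + 47 * c ^ 2 = 8 := by linear_combination 4 * h2
    have h1 : c ^ 2 < 1 := by nlinarith [sq_nonneg (2 * a + c)]
    have h3 : c ^ 2 ≤ 0 := Int.lt_add_one_iff.mp (by linarith)
    have hc0 : c = 0 := by
      have := sq_nonneg c
      exact pow_eq_zero_iff (by norm_num) |>.mp (le_antisymm h3 this)
    subst hc0
    have ha2 : a ^ 2 = 2 := by linarith [key]
    have ha1 : 2 * a ≤ 3 := by nlinarith [sq_nonneg (a - 1)]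
    have ha1' : -3 ≤ 2 * a := by nlinarith [sq_nonneg (a + 1)]
    have hu : a ≤ 1 := by omega
    have hl : -1 ≤ a := by omega
    nlinarith [mul_nonneg (by linarith : (0:ℤ) ≤ 1 - a) (by linarith : (0:ℤ) ≤ 1 + a)]
  · have key : (2 * a + c) ^ 2 + 47 * c ^ 2 = -8 := by linear_combination 4 * h2
    have hpos : (0:ℤ) ≤ (2 * a + c) ^ 2 + 47 * c ^ 2 := by positivity
    linarith

theorem nz_of_absNorm_ne {I : Ideal (𝓞 K)} (h : Ideal.absNorm I ≠ 0) :
    I ∈ nonZeroDivisors (Ideal (𝓞 K)) := by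
  rw [mem_nonZeroDivisors_iff_ne_zero]
  rintro rfl
  exact h (Ideal.absNorm_eq_zero_iff.mpr rfl)

theorem classgroup_card (hb0 : b 0 = 1) (hb1 : b 1 = ϑ) (hsq : ϑ * ϑ = ϑ - 12)
    (hbound : ∀ C : ClassGroup (𝓞 K), ∃ I : (nonZeroDivisors (Ideal (𝓞 K))),
      ClassGroup.mk0 I = C ∧ Ideal.absNorm (I : Ideal (𝓞 K)) ≤ 4) :
    Fintype.card (ClassGroup (𝓞 K)) = 5 := by
  have habsP := (absNormP b hb0 hb1 hsq).1
  have habsQ := (absNormP b hb0 hb1 hsq).2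
  have habsP3 := (absNormP3 b hb0 hb1 hsq).1
  have habsQ3 := (absNormP3 b hb0 hb1 hsq).2
  have hPnz : Ideal.span {(2 : 𝓞 K), ϑ} ∈ nonZeroDivisors (Ideal (𝓞 K)) :=
    nz_of_absNorm_ne (by rw [habsP]; norm_num)
  have hQnz : Ideal.span {(2 : 𝓞 K), ϑ + 1} ∈ nonZeroDivisors (Ideal (𝓞 K)) :=
    nz_of_absNorm_ne (by rw [habsQ]; norm_num)
  have hP3nz : Ideal.span {(3 : 𝓞 K), ϑ} ∈ nonZeroDivisors (Ideal (𝓞 K)) :=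
    nz_of_absNorm_ne (by rw [habsP3]; norm_num)
  have hQ3nz : Ideal.span {(3 : 𝓞 K), ϑ - 1} ∈ nonZeroDivisors (Ideal (𝓞 K)) :=
    nz_of_absNorm_ne (by rw [habsQ3]; norm_num)
  set c : ClassGroup (𝓞 K) := ClassGroup.mk0 ⟨_, hPnz⟩ with hc
  -- relation [P][Q] = 1
  have hPQ : c * ClassGroup.mk0 ⟨_, hQnz⟩ = 1 := by
    rw [hc, ← _root_.map_mul ClassGroup.mk0]
    have e2 : (⟨_, hPnz⟩ * ⟨_, hQnz⟩ : nonZeroDivisors (Ideal (𝓞 K)))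
        = ⟨Ideal.span {(2 : 𝓞 K)}, nz_of_absNorm_ne (by
            have h2rep : (2 : 𝓞 K) = (2 : ℤ) • (1 : 𝓞 K) + (0 : ℤ) • ϑ := by
              simp only [zsmul_eq_mul]; push_cast; ring
            rw [h2rep, absNorm_singleton b hb0 hb1 hsq]; norm_num)⟩ :=
      Subtype.ext (eqPQ hsq)
    rw [e2, ClassGroup.mk0_eq_one_iff]
    exact ⟨⟨2, rfl⟩⟩
  -- relation [P]^2 [P3] = 1
  have hPP3 : c ^ 2 * ClassGroup.mk0 ⟨_, hP3nz⟩ = 1 := by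
    rw [hc, ← _root_.map_pow ClassGroup.mk0, ← _root_.map_mul ClassGroup.mk0]
    have e2 : ((⟨_, hPnz⟩ : nonZeroDivisors (Ideal (𝓞 K))) ^ 2 * ⟨_, hP3nz⟩
        : nonZeroDivisors (Ideal (𝓞 K)))
        = ⟨Ideal.span {ϑ}, nz_of_absNorm_ne (by
            have hrep : ϑ = (0 : ℤ) • (1 : 𝓞 K) + (1 : ℤ) • ϑ := by
              simp only [zsmul_eq_mul]; push_cast; ring
            rw [hrep, absNorm_singleton b hb0 hb1 hsq]; norm_num)⟩ :=
      Subtype.ext (eqTheta b hb0 hb1 hsq).symm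
    rw [e2, ClassGroup.mk0_eq_one_iff]
    exact ⟨⟨ϑ, rfl⟩⟩
  -- relation [P3][Q3] = 1
  have hP3Q3 : ClassGroup.mk0 ⟨_, hP3nz⟩ * ClassGroup.mk0 ⟨_, hQ3nz⟩ = 1 := by
    rw [← _root_.map_mul ClassGroup.mk0]
    have e2 : (⟨_, hP3nz⟩ * ⟨_, hQ3nz⟩ : nonZeroDivisors (Ideal (𝓞 K)))
        = ⟨Ideal.span {(3 : 𝓞 K)}, nz_of_absNorm_ne (by
            have h3rep : (3 : 𝓞 K) = (3 : ℤ) • (1 : 𝓞 K) + (0 : ℤ) • ϑ := by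
              simp only [zsmul_eq_mul]; push_cast; ring
            rw [h3rep, absNorm_singleton b hb0 hb1 hsq]; norm_num)⟩ :=
      Subtype.ext (eqP3Q3 hsq)
    rw [e2, ClassGroup.mk0_eq_one_iff]
    exact ⟨⟨3, rfl⟩⟩
  -- c^5 = 1
  have hc5 : c ^ 5 = 1 := by
    rw [hc, ← _root_.map_pow ClassGroup.mk0]
    have e2 : ((⟨_, hPnz⟩ : nonZeroDivisors (Ideal (𝓞 K))) ^ 5
        : nonZeroDivisors (Ideal (𝓞 K)))
        = ⟨Ideal.span {ϑ + 4}, nz_of_absNorm_ne (by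
            have hrep : ϑ + 4 = (4 : ℤ) • (1 : 𝓞 K) + (1 : ℤ) • ϑ := by
              simp only [zsmul_eq_mul]; push_cast; ring
            rw [hrep, absNorm_singleton b hb0 hb1 hsq]; norm_num)⟩ :=
      Subtype.ext (eqTheta4 b hb0 hb1 hsq).symm
    rw [e2, ClassGroup.mk0_eq_one_iff]
    exact ⟨⟨ϑ + 4, rfl⟩⟩
  -- c ≠ 1
  have hc1 : c ≠ 1 := by
    intro h
    rw [hc, ClassGroup.mk0_eq_one_iff] at h
    obtain ⟨g, hg⟩ := h.1
    obtain ⟨a, d, rfl⟩ := coords b g hb0 hb1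
    have h2' : Ideal.absNorm (Submodule.span (𝓞 K) {a • (1 : 𝓞 K) + d • ϑ}) = 2 := by
      rw [← hg]; exact habsP
    have h2'' : (a ^ 2 + a * d + 12 * d ^ 2).natAbs = 2 := by
      rw [← absNorm_singleton b hb0 hb1 hsq a d]; exact h2'
    exact no_norm_two a d h2''
  have hQc : ClassGroup.mk0 ⟨_, hQnz⟩ = c⁻¹ :=
    eq_inv_of_mul_eq_one_left (by rw [mul_comm]; exact hPQ)
  have hP3c : ClassGroup.mk0 ⟨_, hP3nz⟩ = (c ^ 2)⁻¹ :=
    eq_inv_of_mul_eq_one_left (by rw [mul_comm]; exact hPP3)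
  have hQ3c : ClassGroup.mk0 ⟨_, hQ3nz⟩ = c ^ 2 := by
    have h1 : ClassGroup.mk0 ⟨_, hQ3nz⟩ = (ClassGroup.mk0 ⟨_, hP3nz⟩)⁻¹ :=
      eq_inv_of_mul_eq_one_left (by rw [mul_comm]; exact hP3Q3)
    rw [h1, hP3c, inv_inv]
  -- strong induction: every ideal whose maximal divisors are among the four has class in ⟨c⟩
  have hwit : ∀ n : ℕ, ∀ I : nonZeroDivisors (Ideal (𝓞 K)),
      Ideal.absNorm (I : Ideal (𝓞 K)) = n →
      (∀ M : Ideal (𝓞 K), M.IsMaximal → (I : Ideal (𝓞 K)) ≤ M →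
        M = Ideal.span {(2 : 𝓞 K), ϑ} ∨ M = Ideal.span {(2 : 𝓞 K), ϑ + 1}
          ∨ M = Ideal.span {(3 : 𝓞 K), ϑ} ∨ M = Ideal.span {(3 : 𝓞 K), ϑ - 1}) →
      ClassGroup.mk0 I ∈ Subgroup.zpowers c := by
    intro n
    induction n using Nat.strong_induction_on with
    | _ n ih =>
      rintro ⟨I1, hI1⟩ hn hM
      have hn' : Ideal.absNorm I1 = n := hn
      by_cases htop : I1 = ⊤
      · subst htop
        have h1 : ClassGroup.mk0 ⟨⊤, hI1⟩ = 1 := by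
          rw [ClassGroup.mk0_eq_one_iff]
          exact ⟨⟨1, by simp [Ideal.span_singleton_one]⟩⟩
        rw [h1]; exact Subgroup.one_mem _
      · obtain ⟨M, hMmax, hIM⟩ := Ideal.exists_le_maximal _ htop
        have hM4 := hM M hMmax hIM
        have hMabs : Ideal.absNorm M = 2 ∨ Ideal.absNorm M = 3 := by
          rcases hM4 with rfl | rfl | rfl | rfl
          · exact Or.inl habsP
          · exact Or.inl habsQ
          · exact Or.inr habsP3
          · exact Or.inr habsQ3
        have hMnz : M ∈ nonZeroDivisors (Ideal (𝓞 K)) :=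
          nz_of_absNorm_ne (by rcases hMabs with h | h <;> rw [h] <;> norm_num)
        obtain ⟨I', hI'⟩ := Ideal.dvd_iff_le.mpr hIM
        have hI1nz : I1 ≠ 0 := mem_nonZeroDivisors_iff_ne_zero.mp hI1
        have hI'nz : I' ∈ nonZeroDivisors (Ideal (𝓞 K)) := by
          rw [mem_nonZeroDivisors_iff_ne_zero]
          rintro rfl
          exact hI1nz (by rw [hI', mul_zero])
        have hnm : n = Ideal.absNorm M * Ideal.absNorm I' := by
          rw [← absNorm_mul, ← hI', hn']
        have hI'0 : Ideal.absNorm I' ≠ 0 :=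
          Ideal.absNorm_ne_zero_of_nonZeroDivisors ⟨I', hI'nz⟩
        have hI'lt : Ideal.absNorm I' < n := by
          have h2M : 2 ≤ Ideal.absNorm M := by omega
          have := Nat.mul_le_mul_right (Ideal.absNorm I') h2M
          omega
        have hhyp' : ∀ M' : Ideal (𝓞 K), M'.IsMaximal → I' ≤ M' →
            M' = Ideal.span {(2 : 𝓞 K), ϑ} ∨ M' = Ideal.span {(2 : 𝓞 K), ϑ + 1}
              ∨ M' = Ideal.span {(3 : 𝓞 K), ϑ} ∨ M' = Ideal.span {(3 : 𝓞 K), ϑ - 1} := by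
          intro M' hM'max hle
          exact hM M' hM'max (le_trans (show I1 ≤ I' by rw [hI']; exact Ideal.mul_le_right) hle)
        have hrec := ih _ hI'lt ⟨I', hI'nz⟩ rfl hhyp'
        have hMz : ClassGroup.mk0 ⟨M, hMnz⟩ ∈ Subgroup.zpowers c := by
          rcases hM4 with rfl | rfl | rfl | rfl
          · exact Subgroup.mem_zpowers c
          · show ClassGroup.mk0 ⟨Ideal.span {(2 : 𝓞 K), ϑ + 1}, hQnz⟩ ∈ Subgroup.zpowers c
            rw [hQc]
            exact Subgroup.inv_mem _ (Subgroup.mem_zpowers c)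
          · show ClassGroup.mk0 ⟨Ideal.span {(3 : 𝓞 K), ϑ}, hP3nz⟩ ∈ Subgroup.zpowers c
            rw [hP3c]
            exact Subgroup.inv_mem _ (Subgroup.pow_mem _ (Subgroup.mem_zpowers c) 2)
          · show ClassGroup.mk0 ⟨Ideal.span {(3 : 𝓞 K), ϑ - 1}, hQ3nz⟩ ∈ Subgroup.zpowers c
            rw [hQ3c]
            exact Subgroup.pow_mem _ (Subgroup.mem_zpowers c) 2
        have hsplit : ClassGroup.mk0 ⟨I1, hI1⟩
            = ClassGroup.mk0 ⟨M, hMnz⟩ * ClassGroup.mk0 ⟨I', hI'nz⟩ := by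
          rw [← _root_.map_mul ClassGroup.mk0]
          congr 1
          exact Subtype.ext hI'
        rw [hsplit]
        exact Subgroup.mul_mem _ hMz hrec
  -- every class is a power of c
  have hall : ∀ C : ClassGroup (𝓞 K), C ∈ Subgroup.zpowers c := by
    intro C
    obtain ⟨I, hIC, hIb⟩ := hbound C
    rw [← hIC]
    apply hwit (Ideal.absNorm (I : Ideal (𝓞 K))) I rfl
    intro M hMmax hIM
    have hn0 : Ideal.absNorm (I : Ideal (𝓞 K)) ≠ 0 :=
      Ideal.absNorm_ne_zero_of_nonZeroDivisors I
    have hd : Ideal.absNorm (I : Ideal (𝓞 K)) ∣ 12 := by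
      have h1 : 1 ≤ Ideal.absNorm (I : Ideal (𝓞 K)) := Nat.pos_of_ne_zero hn0
      interval_cases (Ideal.absNorm (I : Ideal (𝓞 K))) <;> norm_num
    obtain ⟨k, hk⟩ := hd
    have h12 : (12 : 𝓞 K) ∈ M := by
      have hmem : ((Ideal.absNorm (I : Ideal (𝓞 K)) : 𝓞 K)) ∈ M :=
        hIM (Ideal.absNorm_mem (I : Ideal (𝓞 K)))
      have : (12 : 𝓞 K) = (Ideal.absNorm (I : Ideal (𝓞 K)) : 𝓞 K) * (k : 𝓞 K) := by
        rw [← Nat.cast_mul, ← hk]; norm_num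
      rw [this]
      exact Ideal.mul_mem_right _ _ hmem
    have hprime := hMmax.isPrime
    have h223 : (2 : 𝓞 K) * (2 * 3) ∈ M := by
      have : (2 : 𝓞 K) * (2 * 3) = 12 := by norm_num
      rw [this]; exact h12
    rcases hprime.mem_or_mem h223 with h2M | h23M
    · have hPQle : Ideal.span {(2 : 𝓞 K), ϑ} * Ideal.span {(2 : 𝓞 K), ϑ + 1} ≤ M := by
        rw [eqPQ hsq, Ideal.span_singleton_le_iff_mem]
        exact h2M
      rcases (Ideal.IsPrime.mul_le hprime).mp hPQle with hle | hle
      · exact Or.inl ((maxP b hb0 hb1 hsq).eq_of_le hMmax.ne_top hle).symm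
      · exact Or.inr (Or.inl ((maxQ b hb0 hb1 hsq).eq_of_le hMmax.ne_top hle).symm)
    · rcases hprime.mem_or_mem h23M with h2M | h3M
      · have hPQle : Ideal.span {(2 : 𝓞 K), ϑ} * Ideal.span {(2 : 𝓞 K), ϑ + 1} ≤ M := by
          rw [eqPQ hsq, Ideal.span_singleton_le_iff_mem]
          exact h2M
        rcases (Ideal.IsPrime.mul_le hprime).mp hPQle with hle | hle
        · exact Or.inl ((maxP b hb0 hb1 hsq).eq_of_le hMmax.ne_top hle).symm
        · exact Or.inr (Or.inl ((maxQ b hb0 hb1 hsq).eq_of_le hMmax.ne_top hle).symm)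
      · have hPQle : Ideal.span {(3 : 𝓞 K), ϑ} * Ideal.span {(3 : 𝓞 K), ϑ - 1} ≤ M := by
          rw [eqP3Q3 hsq, Ideal.span_singleton_le_iff_mem]
          exact h3M
        rcases (Ideal.IsPrime.mul_le hprime).mp hPQle with hle | hle
        · exact Or.inr (Or.inr (Or.inl
            ((maxP3 b hb0 hb1 hsq).eq_of_le hMmax.ne_top hle).symm))
        · exact Or.inr (Or.inr (Or.inr
            ((maxQ3 b hb0 hb1 hsq).eq_of_le hMmax.ne_top hle).symm))
  -- conclude
  have hord : orderOf c = 5 := by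
    have hdvd := orderOf_dvd_of_pow_eq_one hc5
    rcases (Nat.prime_five).eq_one_or_self_of_dvd _ hdvd with h | h
    · exact absurd (orderOf_eq_one_iff.mp h) hc1
    · exact h
  rw [← Nat.card_eq_fintype_card, ← orderOf_eq_card_of_forall_mem_zpowers hall, hord]

end ClassGrp

open NumberField Module

/-- The class number of ℚ(√-47) is 5. -/
theorem classNumber_sqrt_neg_47 (K : Type*) [Field K] [NumberField K]
    (α : K) (hα : α ^ 2 = -47) (hdim : Module.finrank ℚ K = 2) :
    NumberField.classNumber K = 5 := by
  classical
  set θ : K := (1 + α) / 2 with hθdef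
  have hsq : θ * θ = θ - 12 := by
    rw [hθdef]
    linear_combination hα / 4
  have hnr : ∀ q : ℚ, algebraMap ℚ K q ≠ θ := by
    intro q h
    have h1 : algebraMap ℚ K (2 * q - 1) = α := by
      rw [map_sub, _root_.map_mul, map_one, map_ofNat, h, hθdef]
      ring
    have h2 : ((2 * q - 1 : ℚ) ^ 2 : ℚ) = ((-47 : ℚ)) := by
      apply (algebraMap ℚ K).injective
      rw [map_pow, h1, hα, map_neg, map_ofNat]
    nlinarith [sq_nonneg (2 * q - 1), h2]
  obtain ⟨ϑ, b, hϑK, hb0, hb1⟩ := exists_basisZ hsq hnr hdim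
  have hsq' : ϑ * ϑ = ϑ - 12 := by
    apply NumberField.RingOfIntegers.coe_injective
    have hϑK' : algebraMap (𝓞 K) K ϑ = θ := hϑK
    rw [_root_.map_mul, map_sub, hϑK', map_ofNat]
    exact hsq
  have hdisc : NumberField.discr K = -47 := discrK b hb0 hb1 hsq'
  have hreal : NumberField.InfinitePlace.nrRealPlaces K = 0 := by
    have hempty : IsEmpty {φ : K →+* ℂ // NumberField.ComplexEmbedding.IsReal φ} := by
      refine ⟨fun ⟨φ, hφ⟩ => ?_⟩
      have hsq2 : (hφ.embedding α) ^ 2 = (-47 : ℝ) := by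
        rw [← map_pow, hα, map_neg, map_ofNat]
      nlinarith [sq_nonneg (hφ.embedding α)]
    rw [← NumberField.InfinitePlace.card_real_embeddings]
    apply Fintype.card_eq_zero_iff.mpr
    exact hempty
  have hcomplex : NumberField.InfinitePlace.nrComplexPlaces K = 1 := by
    have h := NumberField.InfinitePlace.card_add_two_mul_card_eq_rank K
    rw [hreal, hdim] at h
    omega
  have hbound : ∀ C : ClassGroup (𝓞 K), ∃ I : nonZeroDivisors (Ideal (𝓞 K)),
      ClassGroup.mk0 I = C ∧ Ideal.absNorm (I : Ideal (𝓞 K)) ≤ 4 := by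
    intro C
    obtain ⟨I, hIC, hIb⟩ := NumberField.exists_ideal_in_class_of_norm_le C
    refine ⟨I, hIC, ?_⟩
    rw [hcomplex, hdim, hdisc] at hIb
    have hπ : (3 : ℝ) < Real.pi := Real.pi_gt_three
    have hπ0 : (0 : ℝ) < Real.pi := Real.pi_pos
    have habs : |((-47 : ℤ) : ℝ)| = 47 := by norm_num
    have hsqrt : Real.sqrt |((-47 : ℤ) : ℝ)| < 7 := by
      rw [habs]
      rw [show (7 : ℝ) = Real.sqrt 49 by
        rw [show (49 : ℝ) = 7 ^ 2 by norm_num, Real.sqrt_sq (by norm_num)]]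
      exact Real.sqrt_lt_sqrt (by norm_num) (by norm_num)
    have hsqrt0 : (0 : ℝ) ≤ Real.sqrt |((-47 : ℤ) : ℝ)| := Real.sqrt_nonneg _
    have hinv : Real.pi⁻¹ < 3⁻¹ := by
      rw [inv_lt_inv₀ hπ0 (by norm_num)]
      exact hπ
    have hinv0 : (0 : ℝ) < Real.pi⁻¹ := inv_pos.mpr hπ0
    have hlt : (Ideal.absNorm (I : Ideal (𝓞 K)) : ℝ) < 5 := by
      refine lt_of_le_of_lt hIb ?_
      have he : (4 / Real.pi) ^ 1 * ((Nat.factorial 2 : ℝ) / ((2 : ℕ) : ℝ) ^ 2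
          * Real.sqrt |((-47 : ℤ) : ℝ)|)
          = 2 * Real.pi⁻¹ * Real.sqrt |((-47 : ℤ) : ℝ)| := by
        rw [Nat.factorial]
        norm_num
        ring
      rw [he]
      have h1 : Real.pi⁻¹ * Real.sqrt |((-47 : ℤ) : ℝ)| ≤ Real.pi⁻¹ * 7 :=
        mul_le_mul_of_nonneg_left hsqrt.le hinv0.le
      have h2 : Real.pi⁻¹ * 7 < 3⁻¹ * 7 := by nlinarith [hinv]
      nlinarith [h1, h2]
    have : Ideal.absNorm (I : Ideal (𝓞 K)) < 5 := by exact_mod_cast hlt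
    omega
  rw [NumberField.classNumber]
  exact classgroup_card b hb0 hb1 hsq' hbound
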